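/- Let n ≥ 2 and k ≥ 1 be integers, let g' > 0 and T₁ ∈ ℝ, and set X(t) = e^{(T₁−t)/(n−1)} and z'(t) = (n/((n−1)·g'))·X(t)/(1+X(t)). With α_k = 1 + 1/2 + ⋯ + 1/k, the following hold: (a) α_k = −Σ_{r=1}^{k} (−1)^r·binom(k,r)/r; (b) Σ_{r=0}^{k} (−1)^r·binom(k,r)/(r+2) = 1/((k+1)·(k+2)); (c) for every t ∈ ℝ: ∫_t^∞ z'(s)^{k+1} ds = (n/((n−1)·g'))^{k+1}·(n−1)·[−α_k + log(1+X(t)) − Σ_{r=1}^{k} (−1)^r·binom(k,r)/(r·(1+X(t))^r)]. -/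

import Mathlib

open MeasureTheory

open Finset Filter Real in
private lemma comparison_altsum (m : ℕ) (hm : m ≠ 0) :
    ∑ r ∈ range (m + 1), (-1 : ℝ) ^ r * (m.choose r : ℝ) = 0 := by
  have h := Int.alternating_sum_range_choose_of_ne hm
  have h2 := congrArg (fun z : ℤ => (z : ℝ)) h
  push_cast at h2
  simpa using h2

open Finset Filter Real in
private lemma comparison_S1 (k : ℕ) :
    ∑ r ∈ range (k + 1), (-1 : ℝ) ^ r * (k.choose r : ℝ) / (r + 1)
      = 1 / ((k : ℝ) + 1) := by
  have key : ∀ r ∈ range (k + 1),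
      (-1 : ℝ) ^ r * (k.choose r : ℝ) / (r + 1)
        = (-1 : ℝ) ^ r * ((k+1).choose (r+1) : ℝ) / ((k : ℝ) + 1) := by
    intro r _
    have h := Nat.add_one_mul_choose_eq k r
    have h' : ((k : ℝ) + 1) * (k.choose r : ℝ) = ((k+1).choose (r+1) : ℝ) * ((r : ℝ) + 1) := by
      exact_mod_cast congrArg (fun m : ℕ => (m : ℝ)) h
    have hr : (r : ℝ) + 1 ≠ 0 := by positivity
    have hk : (k : ℝ) + 1 ≠ 0 := by positivity
    rw [div_eq_div_iff hr hk]
    linear_combination ((-1:ℝ)^r) * h'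
  rw [Finset.sum_congr rfl key]
  have hsum : ∑ r ∈ range (k + 1), (-1 : ℝ) ^ r * ((k+1).choose (r+1) : ℝ) = 1 := by
    have h0 := comparison_altsum (k + 1) (Nat.succ_ne_zero k)
    rw [Finset.sum_range_succ'] at h0
    simp only [pow_zero, Nat.choose_zero_right, Nat.cast_one, one_mul, mul_one] at h0
    have : ∑ r ∈ range (k + 1), (-1 : ℝ) ^ (r+1) * ((k+1).choose (r+1) : ℝ) = -1 := by
      linarith
    calc ∑ r ∈ range (k + 1), (-1 : ℝ) ^ r * ((k+1).choose (r+1) : ℝ)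
        = -∑ r ∈ range (k + 1), (-1 : ℝ) ^ (r+1) * ((k+1).choose (r+1) : ℝ) := by
          rw [← Finset.sum_neg_distrib]
          exact Finset.sum_congr rfl fun r _ => by ring
      _ = 1 := by rw [this]; ring
  rw [← Finset.sum_div, hsum]

open Finset Filter Real in
private lemma comparison_T (k : ℕ) :
    ∑ r ∈ range (k + 1), (-1 : ℝ) ^ r * (k.choose (r+1) : ℝ) / ((r:ℝ) + 2)
      = 1 - 1 / ((k : ℝ) + 1) := by
  have h := comparison_S1 k
  rw [Finset.sum_range_succ'] at h
  simp only [pow_zero, Nat.choose_zero_right, Nat.cast_one, one_mul, Nat.cast_zero, zero_add] at h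
  rw [Finset.sum_range_succ]
  simp only [Nat.choose_succ_self, Nat.cast_zero, mul_zero, zero_div, add_zero]
  have : ∑ r ∈ range k, (-1 : ℝ) ^ r * (k.choose (r+1) : ℝ) / ((r:ℝ) + 2)
      = -∑ r ∈ range k, (-1 : ℝ) ^ (r+1) * (k.choose (r+1) : ℝ) / (((r:ℝ) + 1) + 1) := by
    rw [← Finset.sum_neg_distrib]
    exact Finset.sum_congr rfl fun r _ => by ring
  rw [this]
  push_cast at h ⊢
  linarith

open Finset Filter Real in
private lemma comparison_S2 (k : ℕ) :
    ∑ r ∈ range (k + 1), (-1 : ℝ) ^ r * (k.choose r : ℝ) / ((r:ℝ) + 2)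
      = 1 / (((k : ℝ) + 1) * ((k : ℝ) + 2)) := by
  have h1 := comparison_S1 (k+1)
  rw [Finset.sum_range_succ'] at h1
  simp only [pow_zero, Nat.choose_zero_right, Nat.cast_one, one_mul, Nat.cast_zero, zero_add] at h1
  push_cast at h1
  have hsplit : ∀ r ∈ range (k+1),
      (-1 : ℝ) ^ (r+1) * ((k+1).choose (r+1) : ℝ) / (((r:ℝ)+1) + 1)
        = -((-1 : ℝ) ^ r * (k.choose r : ℝ) / ((r:ℝ) + 2))
          - ((-1 : ℝ) ^ r * (k.choose (r+1) : ℝ) / ((r:ℝ) + 2)) := by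
    intro r _
    have hc : ((k+1).choose (r+1) : ℝ) = (k.choose r : ℝ) + (k.choose (r+1) : ℝ) := by
      exact_mod_cast congrArg (fun m : ℕ => (m : ℝ)) (Nat.choose_succ_succ k r)
    rw [hc]; ring
  rw [Finset.sum_congr rfl hsplit, Finset.sum_sub_distrib, Finset.sum_neg_distrib] at h1
  have hT := comparison_T k
  have hk1 : ((k:ℝ) + 1) ≠ 0 := by positivity
  have hk2 : ((k:ℝ) + 2) ≠ 0 := by positivity
  field_simp at h1 hT ⊢
  nlinarith [h1, hT]

open Finset Filter Real in
private lemma comparison_harm (k : ℕ) :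
    ∑ j ∈ range k, (1 : ℝ) / (j + 1)
      = ∑ i ∈ range k, (-1 : ℝ) ^ i * (k.choose (i+1) : ℝ) / ((i:ℝ) + 1) := by
  induction k with
  | zero => simp
  | succ k ih =>
    rw [Finset.sum_range_succ, ih]
    have hsplit : ∀ i ∈ range (k+1),
        (-1 : ℝ) ^ i * ((k+1).choose (i+1) : ℝ) / ((i:ℝ) + 1)
          = (-1 : ℝ) ^ i * (k.choose i : ℝ) / ((i:ℝ) + 1)
            + (-1 : ℝ) ^ i * (k.choose (i+1) : ℝ) / ((i:ℝ) + 1) := by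
      intro i _
      have hc : ((k+1).choose (i+1) : ℝ) = (k.choose i : ℝ) + (k.choose (i+1) : ℝ) := by
        exact_mod_cast congrArg (fun m : ℕ => (m : ℝ)) (Nat.choose_succ_succ k i)
      rw [hc]; ring
    rw [Finset.sum_congr rfl hsplit, Finset.sum_add_distrib]
    have h2 : ∑ i ∈ range (k+1), (-1 : ℝ) ^ i * (k.choose (i+1) : ℝ) / ((i:ℝ) + 1)
        = ∑ i ∈ range k, (-1 : ℝ) ^ i * (k.choose (i+1) : ℝ) / ((i:ℝ) + 1) := by
      rw [Finset.sum_range_succ]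
      simp [Nat.choose_succ_self]
    rw [h2]
    have h1 := comparison_S1 k
    push_cast at h1 ⊢
    rw [h1]
    ring

open Finset Filter Real in
private lemma comparison_binkey (k : ℕ) (u : ℝ) (hu : 0 < u) :
    ∑ r ∈ range (k+1), (-1:ℝ)^r * (k.choose r : ℝ) / u^(r+1)
      = (u - 1)^k / u^(k+1) := by
  have hne : u ≠ 0 := ne_of_gt hu
  have step : ∀ r ∈ range (k+1),
      (-1:ℝ)^r * (k.choose r : ℝ) / u^(r+1)
        = ((-1:ℝ)^r * (k.choose r : ℝ) * u^(k-r)) / u^(k+1) := by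
    intro r hr
    have hrk : r ≤ k := Nat.lt_succ_iff.mp (Finset.mem_range.mp hr)
    have hpow : u^(k+1) = u^(r+1) * u^(k-r) := by
      rw [← pow_add]; congr 1; omega
    rw [hpow]
    field_simp
  rw [Finset.sum_congr rfl step, ← Finset.sum_div]
  have hnum : ∑ r ∈ range (k+1), (-1:ℝ)^r * (k.choose r : ℝ) * u^(k-r) = (u - 1)^k := by
    rw [sub_pow u 1 k,
      ← Finset.sum_range_reflect (fun m => (-1:ℝ)^(m+k) * u^m * 1^(k-m) * (k.choose m : ℝ)) (k+1)]
    apply Finset.sum_congr rfl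
    intro r hr
    have hrk : r ≤ k := Nat.lt_succ_iff.mp (Finset.mem_range.mp hr)
    have hsgn : (-1:ℝ)^(k - r + k) = (-1:ℝ)^r := by
      rcases Nat.even_or_odd r with h | h
      · have h2 : Even (k - r + k) := by
          rw [Nat.even_iff] at *; omega
        rw [h.neg_one_pow, h2.neg_one_pow]
      · have h2 : Odd (k - r + k) := by
          rw [Nat.odd_iff] at *; omega
        rw [h.neg_one_pow, h2.neg_one_pow]
    have h1 : k + 1 - 1 - r = k - r := by omega
    simp only [h1, one_pow, Nat.choose_symm hrk, hsgn]
    ring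
  rw [hnum]

open Finset Filter Real in
private lemma comparison_intpow (a C T₁ : ℝ) (ha : 0 < a) (hC : 0 ≤ C) (k : ℕ) (t : ℝ) :
    (∫ s in Set.Ioi t,
        (C * Real.exp ((T₁ - s) / a) / (1 + Real.exp ((T₁ - s) / a))) ^ (k + 1)) =
      C ^ (k + 1) * a *
        ((∑ r ∈ Icc 1 k, (-1:ℝ)^r * (k.choose r : ℝ) / r)
          + Real.log (1 + Real.exp ((T₁ - t) / a))
          - ∑ r ∈ Icc 1 k, (-1:ℝ)^r * (k.choose r : ℝ)
              / (r * (1 + Real.exp ((T₁ - t) / a)) ^ r)) := by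
  have hane : a ≠ 0 := ne_of_gt ha
  set G : ℝ → ℝ := fun x => C ^ (k+1) * a *
      ((∑ r ∈ Icc 1 k, (-1:ℝ)^r * (k.choose r : ℝ) / (r * (1 + x)^r))
        - Real.log (1 + x)) with hG
  set F : ℝ → ℝ := fun s => G (Real.exp ((T₁ - s) / a)) with hF
  have hderiv : ∀ s : ℝ, HasDerivAt F
      ((C * Real.exp ((T₁ - s) / a) / (1 + Real.exp ((T₁ - s) / a))) ^ (k + 1)) s := by
    intro s
    set x := Real.exp ((T₁ - s) / a) with hx
    have hxpos : 0 < x := Real.exp_pos _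
    have hUpos : 0 < 1 + x := by linarith
    have hUne : (1 + x) ≠ 0 := ne_of_gt hUpos
    have hlin : HasDerivAt (fun s : ℝ => (T₁ - s) / a) (-1 / a) s := by
      have : HasDerivAt (fun s : ℝ => T₁ - s) (-1) s := by
        simpa using (hasDerivAt_id s).const_sub T₁
      simpa using this.div_const a
    have hX : HasDerivAt (fun s : ℝ => Real.exp ((T₁ - s) / a)) (x * (-1/a)) s :=
      hlin.exp
    have hU : HasDerivAt (fun s : ℝ => 1 + Real.exp ((T₁ - s) / a)) (x * (-1/a)) s :=
      hX.const_add 1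
    have hlog : HasDerivAt (fun s : ℝ => Real.log (1 + Real.exp ((T₁ - s) / a)))
        ((x * (-1/a)) / (1 + x)) s := hU.log hUne
    have hsum : HasDerivAt
        (fun s : ℝ => ∑ r ∈ Icc 1 k, (-1:ℝ)^r * (k.choose r : ℝ)
            / (r * (1 + Real.exp ((T₁ - s) / a))^r))
        (∑ r ∈ Icc 1 k,
          (0 * ((r:ℝ) * (1 + x)^r) - (-1:ℝ)^r * (k.choose r : ℝ) *
            ((r:ℝ) * ((r:ℝ) * (1 + x)^(r-1) * (x * (-1/a)))))
            / ((r:ℝ) * (1 + x)^r)^2) s := by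
      apply HasDerivAt.fun_sum
      intro r hr
      have h1 : 1 ≤ r := (Finset.mem_Icc.mp hr).1
      have hrpos : (0:ℝ) < r := by exact_mod_cast h1
      have hden : HasDerivAt (fun s : ℝ => (r:ℝ) * (1 + Real.exp ((T₁ - s) / a))^r)
          ((r:ℝ) * ((r:ℝ) * (1 + x)^(r-1) * (x * (-1/a)))) s := (hU.pow r).const_mul (r:ℝ)
      exact (hasDerivAt_const s ((-1:ℝ)^r * (k.choose r : ℝ))).div hden
        (by positivity)
    have hFd := ((hsum.sub hlog).const_mul (C ^ (k+1) * a))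
    refine hFd.congr_deriv ?_
    symm
    have e1 : ∀ r ∈ Icc 1 k,
        (0 * ((r:ℝ) * (1 + x)^r) - (-1:ℝ)^r * (k.choose r : ℝ) *
            ((r:ℝ) * ((r:ℝ) * (1 + x)^(r-1) * (x * (-1/a)))))
            / ((r:ℝ) * (1 + x)^r)^2
          = (x / a) * ((-1:ℝ)^r * (k.choose r : ℝ) / (1 + x)^(r+1)) := by
      intro r hr
      have h1 : 1 ≤ r := (Finset.mem_Icc.mp hr).1
      obtain ⟨m, rfl⟩ : ∃ m, r = m + 1 := ⟨r - 1, by omega⟩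
      have hrpos : (0:ℝ) < ((m:ℝ) + 1) := by positivity
      simp only [Nat.add_sub_cancel]
      push_cast
      field_simp
      ring
    rw [Finset.sum_congr rfl e1, ← Finset.mul_sum]
    have hrange : ∑ r ∈ range (k+1), (-1:ℝ)^r * (k.choose r : ℝ) / (1 + x)^(r+1)
        = 1 / (1 + x) + ∑ r ∈ Icc 1 k, (-1:ℝ)^r * (k.choose r : ℝ) / (1 + x)^(r+1) := by
      have hins : range (k+1) = insert 0 (Icc 1 k) := by
        ext y; simp only [Finset.mem_range, Finset.mem_insert, Finset.mem_Icc]; omega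
      rw [hins, Finset.sum_insert (by simp)]
      simp
    have hbin := comparison_binkey k (1 + x) hUpos
    have hsum' : ∑ r ∈ Icc 1 k, (-1:ℝ)^r * (k.choose r : ℝ) / (1 + x)^(r+1)
        = (1 + x - 1)^k / (1 + x)^(k+1) - 1/(1 + x) := by
      rw [← hbin, hrange]; ring
    rw [hsum']
    have hxk : (1 + x - 1 : ℝ) = x := by ring
    rw [hxk]
    rw [div_pow, mul_pow]
    field_simp
    ring
  have hXlim : Tendsto (fun s : ℝ => Real.exp ((T₁ - s) / a)) atTop (nhds 0) := by
    apply Real.tendsto_exp_atBot.comp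
    apply Tendsto.atBot_div_const ha
    exact (tendsto_atBot_add_const_left atTop T₁ (tendsto_neg_atTop_atBot (G := ℝ))).congr
      (fun s => (sub_eq_add_neg T₁ s).symm)
  have hGcont : ContinuousAt G 0 := by
    apply ContinuousAt.mul continuousAt_const
    apply ContinuousAt.sub
    · apply tendsto_finset_sum
      intro r hr
      have h1 : 1 ≤ r := (Finset.mem_Icc.mp hr).1
      have hrpos : (0:ℝ) < r := by exact_mod_cast h1
      have hne : ((r:ℝ) * (1 + (0:ℝ))^r) ≠ 0 := by positivity
      exact ContinuousAt.div continuousAt_const (by fun_prop) hne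
    · exact (Real.continuousAt_log (by norm_num)).comp
        (by fun_prop)
  have hFlim : Tendsto F atTop (nhds (G 0)) := hGcont.tendsto.comp hXlim
  have hnonneg : ∀ s ∈ Set.Ioi t,
      0 ≤ (C * Real.exp ((T₁ - s) / a) / (1 + Real.exp ((T₁ - s) / a))) ^ (k + 1) := by
    intro s _
    have := Real.exp_pos ((T₁ - s) / a)
    positivity
  have hint := MeasureTheory.integral_Ioi_of_hasDerivAt_of_nonneg'
    (g := F) (fun s _ => hderiv s) hnonneg hFlim
  rw [hint]
  have hG0 : G 0 = C ^ (k+1) * a * (∑ r ∈ Icc 1 k, (-1:ℝ)^r * (k.choose r : ℝ) / r) := by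
    rw [hG]
    simp
  rw [hG0]
  simp only [hF, hG]
  ring

/-- Lemma 3.4: binomial-harmonic identities and an explicit evaluation of the improper
integral of powers of the comparison function
`z'(t) = (n/((n-1)g')) X(t)/(1+X(t))` with `X(t) = e^{(T₁-t)/(n-1)}`. -/
theorem comparison_integrals
    (n k : ℕ) (hn : 2 ≤ n) (hk : 1 ≤ k) (g' T₁ : ℝ) (hg' : 0 < g') :
    -- (a) α_k = -∑_{r=1}^k (-1)^r C(k,r)/r
    ((∑ j ∈ Finset.range k, (1 : ℝ) / (j + 1)) =
      -∑ r ∈ Finset.Icc 1 k, (-1 : ℝ) ^ r * (k.choose r : ℝ) / r) ∧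
    -- (b) ∑_{r=0}^k (-1)^r C(k,r)/(r+2) = 1/((k+1)(k+2))
    ((∑ r ∈ Finset.range (k + 1), (-1 : ℝ) ^ r * (k.choose r : ℝ) / (r + 2)) =
      1 / (((k : ℝ) + 1) * ((k : ℝ) + 2))) ∧
    -- (c) the improper integral of z'^{k+1}
    (∀ t : ℝ,
      (∫ s in Set.Ioi t,
        ((n : ℝ) / (((n : ℝ) - 1) * g') * Real.exp ((T₁ - s) / ((n : ℝ) - 1))
          / (1 + Real.exp ((T₁ - s) / ((n : ℝ) - 1)))) ^ (k + 1)) =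
      ((n : ℝ) / (((n : ℝ) - 1) * g')) ^ (k + 1) * ((n : ℝ) - 1) *
        (-(∑ j ∈ Finset.range k, (1 : ℝ) / (j + 1))
          + Real.log (1 + Real.exp ((T₁ - t) / ((n : ℝ) - 1)))
          - ∑ r ∈ Finset.Icc 1 k, (-1 : ℝ) ^ r * (k.choose r : ℝ)
              / (r * (1 + Real.exp ((T₁ - t) / ((n : ℝ) - 1))) ^ r))) := by
  have parta : (∑ j ∈ Finset.range k, (1 : ℝ) / (j + 1)) =
      -∑ r ∈ Finset.Icc 1 k, (-1 : ℝ) ^ r * (k.choose r : ℝ) / r := by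
    have hIcc : ∑ r ∈ Finset.Icc 1 k, (-1 : ℝ) ^ r * (k.choose r : ℝ) / r
        = ∑ i ∈ Finset.range k, (-1 : ℝ) ^ (1 + i) * (k.choose (1 + i) : ℝ) / ((1 + i : ℕ) : ℝ) := by
      rw [← Finset.Ico_add_one_right_eq_Icc, Finset.sum_Ico_eq_sum_range]
      simp
    rw [hIcc, comparison_harm k, ← Finset.sum_neg_distrib]
    apply Finset.sum_congr rfl
    intro i _
    rw [Nat.add_comm 1 i]
    push_cast
    ring
  refine ⟨parta, comparison_S2 k, ?_⟩
  intro t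
  have ha : (0:ℝ) < (n : ℝ) - 1 := by
    have : (2:ℝ) ≤ (n : ℝ) := by exact_mod_cast hn
    linarith
  have hC : (0:ℝ) ≤ (n : ℝ) / (((n : ℝ) - 1) * g') := by positivity
  rw [parta, neg_neg]
  exact comparison_intpow ((n : ℝ) - 1) ((n : ℝ) / (((n : ℝ) - 1) * g')) T₁ ha hC k t
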